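/- Let σ be a linear extension of a finite poset R and let x, y ∈ R. Suppose there exists ρ : Pre_σ(x) → ℂ with ρ(x) ≠ 0 such that for every u ∈ Suc_σ(y) with u ≠ y, ∑_{w ∈ Pre_σ(x), w ≤ u} ρ(w) = 0. Then σ(Ech_σ(x)) ≤ σ(y). -/

import Mathlib

open scoped Classical
open Finset

noncomputable section

/-- A linear extension of a finite poset, viewed as an order-preserving
bijection onto `Fin n`. -/
def IsLinExt {α : Type*} [PartialOrder α] {n : ℕ} (σ : α ≃ Fin n) : Prop :=
  ∀ a b : α, a ≤ b → σ a ≤ σ b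

/-- The Cartan matrix of a finite poset with respect to a linear extension. -/
def cartan {α : Type*} [PartialOrder α] {n : ℕ} (σ : α ≃ Fin n) :
    Matrix (Fin n) (Fin n) ℂ :=
  fun i j => if σ.symm j ≤ σ.symm i then 1 else 0

/-- Upper-triangular matrices. -/
def IsUpperTri {n : ℕ} (U : Matrix (Fin n) (Fin n) ℂ) : Prop :=
  ∀ i j : Fin n, j < i → U i j = 0

/-- The permutation matrix of `π`, with a `1` in row `i` and column `π i`. -/
def permMat {n : ℕ} (π : Equiv.Perm (Fin n)) : Matrix (Fin n) (Fin n) ℂ :=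
  fun i j => if π i = j then 1 else 0

/-- `π` is the (unique) permutation indexing the Bruhat cell of `W`,
i.e. `W ∈ B (permMat π) B` with `B` the invertible upper-triangular matrices. -/
def IsBruhatPerm {n : ℕ} (W : Matrix (Fin n) (Fin n) ℂ) (π : Equiv.Perm (Fin n)) : Prop :=
  ∃ U₁ U₂ : Matrix (Fin n) (Fin n) ℂ,
    IsUpperTri U₁ ∧ IsUpperTri U₂ ∧ IsUnit U₁.det ∧ IsUnit U₂.det ∧
      W = U₁ * permMat π * U₂

/-- Echelonmotion with respect to `σ`, given the Bruhat permutation `π` of the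
Cartan matrix: `ech σ π x = y` iff `permMat π` has a `1` in row `σ y`, column `σ x`. -/
def ech {α : Type*} [PartialOrder α] {n : ℕ} (σ : α ≃ Fin n) (π : Equiv.Perm (Fin n)) :
    α → α := fun x => σ.symm (π⁻¹ (σ x))

end

/-- If there is `ρ` on `Pre_σ(x)` with `ρ x ≠ 0` whose partial sums vanish on
principal ideals of elements of `Suc_σ(y) \ {y}`, then `σ(Ech_σ x) ≤ σ y`. -/
theorem stmt15 {α : Type*} [PartialOrder α] [Fintype α] {n : ℕ}
    (σ : α ≃ Fin n) (hσ : IsLinExt σ)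
    (π : Equiv.Perm (Fin n)) (hπ : IsBruhatPerm (cartan σ) π)
    (x y : α) (ρ : α → ℂ) (hρx : ρ x ≠ 0)
    (hρ : ∀ u : α, σ y ≤ σ u → u ≠ y →
      ∑ w ∈ Finset.univ.filter (fun w : α => σ w ≤ σ x ∧ w ≤ u), ρ w = 0) :
    σ (ech σ π x) ≤ σ y := by
  obtain ⟨U₁, U₂, hU₁, hU₂, hd₁, hd₂, hW⟩ := hπ
  -- the vector supported on Pre_σ(x)
  set c : Fin n → ℂ := fun j => if j ≤ σ x then ρ (σ.symm j) else 0 with hc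
  -- Step 1 : (W.mulVec c) i = 0 for i > σ y
  have hWc : ∀ i : Fin n, σ y < i → (cartan σ).mulVec c i = 0 := by
    intro i hi
    have key := hρ (σ.symm i) (by simpa using hi.le)
      (by intro h; apply lt_irrefl (σ y); calc σ y < i := hi
            _ = σ y := by rw [← h]; simp)
    rw [Matrix.mulVec, dotProduct,
      ← Equiv.sum_comp σ (fun j => cartan σ i j * c j), ← key, Finset.sum_filter]
    apply Finset.sum_congr rfl
    intro w _
    simp only [cartan, hc, Equiv.symm_apply_apply, Function.comp]
    by_cases h1 : w ≤ σ.symm i <;> by_cases h2 : σ w ≤ σ x <;> simp [h1, h2]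
  -- Step 2 : d = U₂.mulVec c
  set d : Fin n → ℂ := U₂.mulVec c with hdd
  have hdiag : ∀ j : Fin n, U₂ j j ≠ 0 := by
    intro j hj
    rw [Matrix.det_of_upperTriangular hU₂] at hd₂
    exact hd₂.ne_zero (Finset.prod_eq_zero (Finset.mem_univ j) hj)
  have hd0 : ∀ j : Fin n, σ x < j → d j = 0 := by
    intro j hj
    rw [hdd, Matrix.mulVec, dotProduct]
    apply Finset.sum_eq_zero
    intro k _
    by_cases hk : k < j
    · rw [hU₂ j k hk, zero_mul]
    · have : ¬ k ≤ σ x := fun h => hk (lt_of_le_of_lt h hj)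
      simp [hc, this]
  have hdx : d (σ x) ≠ 0 := by
    rw [hdd, Matrix.mulVec, dotProduct]
    rw [Finset.sum_eq_single (σ x)]
    · simp only [hc, le_refl, if_pos, Equiv.symm_apply_apply]
      exact mul_ne_zero (hdiag _) hρx
    · intro k _ hk
      rcases lt_or_gt_of_ne hk with h | h
      · rw [hU₂ (σ x) k h, zero_mul]
      · simp [hc, not_le_of_gt h]
    · simp
  -- Step 3 : e i = d (π i), and e i = 0 for i > σ y
  have hPd : (permMat π).mulVec d = fun i => d (π i) := by
    funext i
    rw [Matrix.mulVec, dotProduct, Finset.sum_eq_single (π i)]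
    · simp [permMat]
    · intro k _ hk; simp [permMat, Ne.symm hk]
    · simp
  have hcomp : (cartan σ).mulVec c = U₁.mulVec ((permMat π).mulVec d) := by
    rw [hW, hdd, ← Matrix.mulVec_mulVec, ← Matrix.mulVec_mulVec]
  haveI : Invertible U₁ := U₁.invertibleOfIsUnitDet hd₁
  have hU₁inv : IsUpperTri U₁⁻¹ := Matrix.blockTriangular_inv_of_blockTriangular hU₁
  have he : ∀ i : Fin n, σ y < i → d (π i) = 0 := by
    intro i hi
    have hcancel : ∀ v : Fin n → ℂ, U₁⁻¹.mulVec (U₁.mulVec v) = v := fun v => by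
      rw [Matrix.mulVec_mulVec, Matrix.nonsing_inv_mul U₁ hd₁, Matrix.one_mulVec]
    have h1 : (permMat π).mulVec d = U₁⁻¹.mulVec ((cartan σ).mulVec c) := by
      rw [hcomp, hcancel]
    have h2 : U₁⁻¹.mulVec ((cartan σ).mulVec c) i = 0 := by
      rw [Matrix.mulVec, dotProduct]
      apply Finset.sum_eq_zero
      intro k _
      by_cases hk : k < i
      · rw [hU₁inv i k hk, zero_mul]
      · rw [hWc k (lt_of_lt_of_le hi (le_of_not_gt hk)), mul_zero]
    have := congrFun hPd i
    rw [h1] at this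
    rw [← this, h2]
  -- Step 4
  have hech : σ (ech σ π x) = π⁻¹ (σ x) := by simp [ech]
  rw [hech]
  by_contra hcon
  push_neg at hcon
  have : d (π (π⁻¹ (σ x))) = 0 := he _ hcon
  rw [show π (π⁻¹ (σ x)) = σ x from π.apply_symm_apply (σ x)] at this
  exact hdx this
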